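/- arXiv:1801.00328 — 2 statements merged into one kernel-verified Lean document; each statement's English description precedes it below -/
import Mathlib

section
/- If the vertices of a convex point set P are partitioned into k ≥ 2 consecutive arcs giving boundary paths P_1, ..., P_k, and v is a non-crossing spanning path with hull-edge set exactly P_1 ∪ ... ∪ P_k, then fixing which endpoint of which non-degenerate P_i is an endpoint of v determines v uniquely; moreover, a degenerate (single-vertex) P_i cannot contain an endpoint of v. -/
namespace PG

/-- The `k`-th vertex (mod `n`) of the convex polygon. -/
def pt (n : ℕ) (hn : 0 < n) (k : ℕ) : Fin n := ⟨k % n, Nat.mod_lt _ hn⟩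

/-- `e` is a boundary (convex hull) edge of the convex `n`-gon. -/
def IsHullEdge {n : ℕ} (e : Sym2 (Fin n)) : Prop :=
  ∃ a b : Fin n, e = s(a, b) ∧ ((a.val + 1) % n = b.val ∨ (b.val + 1) % n = a.val)

instance {n : ℕ} : DecidablePred (IsHullEdge (n := n)) := fun _ => by
  unfold IsHullEdge; infer_instance

/-- Two chords of the convex `n`-gon cross (intersect in interior points):
their endpoint pairs are all distinct and separate each other in the cyclic order. -/
def Crosses {n : ℕ} (e f : Sym2 (Fin n)) : Prop :=
  ∃ a b c d : Fin n, e = s(a, b) ∧ f = s(c, d) ∧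
    a ≠ b ∧ c ≠ d ∧ a ≠ c ∧ a ≠ d ∧ b ≠ c ∧ b ≠ d ∧
    (((c.val + n - a.val) % n < (b.val + n - a.val) % n) ↔
      ¬((d.val + n - a.val) % n < (b.val + n - a.val) % n))

instance {n : ℕ} (e f : Sym2 (Fin n)) : Decidable (Crosses e f) := by
  unfold Crosses; infer_instance

/-- The edge set of the spanning path visiting the points in the order given
by the permutation `p`. -/
def pathEdges {n : ℕ} (p : Equiv.Perm (Fin n)) : Finset (Sym2 (Fin n)) :=
  Finset.univ.filter (fun e => ∃ i j : Fin n, e = s(p i, p j) ∧ j.val = i.val + 1)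

/-- `E` is the edge set of a non-crossing (plane) spanning path. -/
def IsNCPath {n : ℕ} (E : Finset (Sym2 (Fin n))) : Prop :=
  (∃ p : Equiv.Perm (Fin n), E = pathEdges p) ∧ ∀ e ∈ E, ∀ f ∈ E, ¬ Crosses e f

instance {n : ℕ} : DecidablePred (IsNCPath (n := n)) := fun _ => by
  unfold IsNCPath pathEdges; infer_instance

/-- Vertices of the path graph `G(P)`: non-crossing spanning paths. -/
def PVert (n : ℕ) := {E : Finset (Sym2 (Fin n)) // IsNCPath E}

instance {n : ℕ} : Fintype (PVert n) := Subtype.fintype _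
instance {n : ℕ} : DecidableEq (PVert n) := Subtype.instDecidableEq

/-- The path graph `G(P)`: two plane spanning paths are adjacent iff their
edge sets differ in exactly two edges. -/
def pathGraph (n : ℕ) : SimpleGraph (PVert n) where
  Adj u v := u ≠ v ∧ (u.1 \ v.1 ∪ v.1 \ u.1).card = 2
  symm := ⟨by rintro u v ⟨h1, h2⟩; exact ⟨h1.symm, by rwa [Finset.union_comm]⟩⟩
  loopless := ⟨by rintro u ⟨h, _⟩; exact h rfl⟩

instance {n : ℕ} : DecidableRel (pathGraph n).Adj := fun u v => by
  unfold pathGraph; infer_instance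

/-- `v` is a boundary path: all its edges are hull edges. -/
def IsBoundary {n : ℕ} (v : PVert n) : Prop := ∀ e ∈ v.1, IsHullEdge e

/-- Number of diagonals (the level) of a path. -/
def diagCount {n : ℕ} (v : PVert n) : ℕ :=
  (v.1.filter (fun e => ¬ IsHullEdge e)).card

/-- Degree of a point in an edge set. -/
def degIn {n : ℕ} (E : Finset (Sym2 (Fin n))) (x : Fin n) : ℕ :=
  (E.filter (fun e => x ∈ e)).card

/-! ### Auxiliary: cyclic distance arithmetic -/

/-- cyclic distance from `y` to `x` (how far `x` is ahead of `y`). -/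
def dd (n : ℕ) (x y : Fin n) : ℕ := (x.val + n - y.val) % n

lemma modtwo (m k : ℕ) (hk : 0 < k) (h : m < 2 * k) :
    m % k = if m < k then m else m - k := by
  have hk' := hk
  split_ifs with h1
  · exact Nat.mod_eq_of_lt h1
  · rw [Nat.mod_eq_sub_mod (by omega)]
    exact Nat.mod_eq_of_lt (by omega)

variable {n : ℕ}

lemma dd_eq (hn : 0 < n) (x y : Fin n) :
    dd n x y = if y.val ≤ x.val then x.val - y.val else x.val + n - y.val := by
  have hx := x.isLt; have hy := y.isLt
  unfold dd
  rw [modtwo _ _ hn (by omega)]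
  split_ifs <;> omega

lemma dd_lt (hn : 0 < n) (x y : Fin n) : dd n x y < n := by
  rw [dd_eq hn]; have hx := x.isLt; have hy := y.isLt; split_ifs <;> omega

lemma dd_self (hn : 0 < n) (x : Fin n) : dd n x x = 0 := by
  rw [dd_eq hn]; simp

lemma dd_eq_zero (hn : 0 < n) {x y : Fin n} (h : dd n x y = 0) : x = y := by
  rw [dd_eq hn] at h
  have hx := x.isLt; have hy := y.isLt
  apply Fin.ext
  split_ifs at h <;> omega

lemma dd_cocycle (hn : 0 < n) (x z y : Fin n) :
    (dd n x z + dd n z y) % n = dd n x y := by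
  have hx := x.isLt; have hy := y.isLt; have hz := z.isLt
  rw [dd_eq hn, dd_eq hn, dd_eq hn]
  rw [modtwo _ _ hn (by split_ifs <;> omega)]
  split_ifs <;> omega

lemma dd_add_dd (hn : 0 < n) {x y : Fin n} (h : x ≠ y) :
    dd n x y + dd n y x = n := by
  have h1 := dd_cocycle hn x y x
  rw [dd_self hn] at h1
  have h2 : dd n x y ≠ 0 := fun hc => h (dd_eq_zero hn hc)
  have h3 := dd_lt hn x y; have h4 := dd_lt hn y x
  rw [modtwo _ _ hn (by omega)] at h1
  split_ifs at h1 <;> omega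

lemma dd_inj (hn : 0 < n) {x y a : Fin n} (h : dd n x a = dd n y a) : x = y := by
  have h1 := dd_cocycle hn x a y
  have h2 := dd_cocycle hn y a y
  rw [dd_self hn] at h2
  rw [h, h2] at h1
  exact dd_eq_zero hn h1.symm

lemma dd_exists (hn : 0 < n) (a : Fin n) (m : ℕ) (hm : m < n) :
    ∃ x : Fin n, dd n x a = m := by
  refine ⟨⟨(a.val + m) % n, Nat.mod_lt _ hn⟩, ?_⟩
  have ha := a.isLt
  rw [dd_eq hn]
  simp only
  rw [modtwo _ _ hn (by omega)]
  split_ifs <;> omega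

lemma succ_of_dd_one (hn : 0 < n) {x y : Fin n} (h : dd n y x = 1) :
    (x.val + 1) % n = y.val := by
  have hx := x.isLt; have hy := y.isLt
  rw [dd_eq hn] at h
  rw [modtwo _ _ hn (by omega)]
  split_ifs at h ⊢ <;> omega

lemma isHullEdge_of_dd_one (hn : 0 < n) {x y : Fin n} (h : dd n y x = 1) :
    IsHullEdge s(x, y) :=
  ⟨x, y, rfl, Or.inl (succ_of_dd_one hn h)⟩

lemma isHullEdge_of_dd_one' (hn : 0 < n) {x y : Fin n} (h : dd n x y = 1) :
    IsHullEdge s(x, y) :=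
  ⟨x, y, rfl, Or.inr (succ_of_dd_one hn h)⟩

/-! ### Auxiliary: path points -/

/-- the `j`-th point of the path `p` -/
def pp (hn : 0 < n) (p : Equiv.Perm (Fin n)) (j : ℕ) : Fin n := p (pt n hn j)

lemma pt_of_lt (hn : 0 < n) {j : ℕ} (hj : j < n) : pt n hn j = ⟨j, hj⟩ := by
  unfold pt; exact Fin.ext (Nat.mod_eq_of_lt hj)

lemma pp_inj (hn : 0 < n) (p : Equiv.Perm (Fin n)) {j k : ℕ} (hj : j < n) (hk : k < n)
    (h : pp hn p j = pp hn p k) : j = k := by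
  unfold pp at h
  have := p.injective h
  rw [pt_of_lt hn hj, pt_of_lt hn hk] at this
  exact congrArg Fin.val this

lemma pp_ne (hn : 0 < n) (p : Equiv.Perm (Fin n)) {j k : ℕ} (hj : j < n) (hk : k < n)
    (h : j ≠ k) : pp hn p j ≠ pp hn p k :=
  fun hc => h (pp_inj hn p hj hk hc)

lemma pp_surj (hn : 0 < n) (p : Equiv.Perm (Fin n)) (x : Fin n) :
    ∃ t, t < n ∧ pp hn p t = x := by
  refine ⟨(p.symm x).val, (p.symm x).isLt, ?_⟩
  unfold pp
  rw [pt_of_lt hn (p.symm x).isLt]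
  have : (⟨(p.symm x).val, (p.symm x).isLt⟩ : Fin n) = p.symm x := rfl
  rw [this]
  exact p.apply_symm_apply x

lemma mem_pathEdges (hn : 0 < n) (p : Equiv.Perm (Fin n)) (e : Sym2 (Fin n)) :
    e ∈ pathEdges p ↔ ∃ t, t + 1 < n ∧ e = s(pp hn p t, pp hn p (t + 1)) := by
  unfold pathEdges
  rw [Finset.mem_filter]
  simp only [Finset.mem_univ, true_and]
  constructor
  · rintro ⟨i, j, he, hij⟩
    refine ⟨i.val, by omega, ?_⟩
    unfold pp
    rw [pt_of_lt hn i.isLt, pt_of_lt hn (by omega : i.val + 1 < n)]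
    simpa [← hij] using he
  · rintro ⟨t, ht, he⟩
    refine ⟨⟨t, by omega⟩, ⟨t + 1, ht⟩, ?_, rfl⟩
    unfold pp at he
    rw [pt_of_lt hn (by omega : t < n), pt_of_lt hn ht] at he
    exact he

lemma pp_rev (hn : 0 < n) (p : Equiv.Perm (Fin n)) {t : ℕ} (ht : t < n) :
    pp hn (Fin.revPerm.trans p) t = pp hn p (n - 1 - t) := by
  unfold pp
  rw [pt_of_lt hn ht, pt_of_lt hn (by omega : n - 1 - t < n)]
  simp only [Equiv.trans_apply, Fin.revPerm_apply]
  congr 1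
  apply Fin.ext
  simp [Fin.val_rev]
  omega

lemma pathEdges_rev (hn : 0 < n) (p : Equiv.Perm (Fin n)) :
    pathEdges (Fin.revPerm.trans p) = pathEdges p := by
  ext e
  rw [mem_pathEdges hn, mem_pathEdges hn]
  constructor
  · rintro ⟨t, ht, he⟩
    refine ⟨n - 2 - t, by omega, ?_⟩
    rw [pp_rev hn p (by omega), pp_rev hn p ht] at he
    rw [show n - 1 - t = (n - 2 - t) + 1 by omega] at he
    rw [show n - 1 - (t + 1) = n - 2 - t by omega] at he
    rw [he]; exact Sym2.eq_swap
  · rintro ⟨t, ht, he⟩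
    refine ⟨n - 2 - t, by omega, ?_⟩
    rw [pp_rev hn _ (by omega : n - 2 - t < n), pp_rev hn _ (by omega : n - 2 - t + 1 < n)]
    rw [show n - 1 - (n - 2 - t) = t + 1 by omega, show n - 1 - (n - 2 - t + 1) = t by omega]
    rw [he]; exact Sym2.eq_swap

lemma switch (f : ℕ → Prop) (s : ℕ) : ∀ k : ℕ, f s → ¬ f (s + k) →
    ∃ t, s ≤ t ∧ t < s + k ∧ f t ∧ ¬ f (t + 1) := by
  intro k
  induction k with
  | zero => intro hs hk; exact absurd hs hk
  | succ k ih =>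
    intro hs hk
    by_cases h : f (s + k)
    · exact ⟨s + k, by omega, by omega, h, by rw [show s + k + 1 = s + (k+1) by omega]; exact hk⟩
    · obtain ⟨t, h1, h2, h3, h4⟩ := ih hs h
      exact ⟨t, h1, by omega, h3, h4⟩

/-- Invariant: the first `i+1` points of `p` form the cyclic arc `[a, a+i]`,
and `p i` is one of its two endpoints. -/
def Sd (hn : 0 < n) (p : Equiv.Perm (Fin n)) (a : Fin n) (i : ℕ) : Prop :=
  (∀ j ≤ i, dd n (pp hn p j) a ≤ i) ∧
  (dd n (pp hn p i) a = 0 ∨ dd n (pp hn p i) a = i) ∧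
  (∀ x : Fin n, dd n x a ≤ i → ∃ j, j ≤ i ∧ pp hn p j = x)

lemma Sd_base (hn : 0 < n) (p : Equiv.Perm (Fin n)) : Sd hn p (pp hn p 0) 0 := by
  refine ⟨?_, Or.inl (dd_self hn _), ?_⟩
  · intro j hj
    interval_cases j
    rw [dd_self hn]
  · intro x hx
    exact ⟨0, le_refl 0, (dd_eq_zero hn (by omega)).symm⟩

/-- The key geometric step: since `p` is non-crossing, the point `p (i+1)` must
be one of the two neighbours of the arc `[a, a+i]`. -/
lemma Sd_step (hn : 0 < n) (p : Equiv.Perm (Fin n))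
    (NC : ∀ e ∈ pathEdges p, ∀ f ∈ pathEdges p, ¬ Crosses e f)
    (a : Fin n) (i : ℕ) (hi : i + 1 < n) (hS : Sd hn p a i) :
    dd n (pp hn p (i + 1)) a = i + 1 ∨ dd n (pp hn p (i + 1)) a = n - 1 := by
  obtain ⟨H1, H2, H3⟩ := hS
  set c := pp hn p (i + 1) with hc
  set u := pp hn p i with hu
  have hc_gt : i < dd n c a := by
    by_contra h
    push_neg at h
    obtain ⟨j, hj, hpj⟩ := H3 _ h
    have := pp_inj hn p (by omega) hi hpj
    omega
  by_contra hcon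
  push_neg at hcon
  obtain ⟨hcon1, hcon2⟩ := hcon
  have hclt := dd_lt hn c a
  -- so i + 2 ≤ dd c a ≤ n - 2
  obtain ⟨x1, hx1⟩ := dd_exists hn a (i + 1) (by omega)
  obtain ⟨x2, hx2⟩ := dd_exists hn a (n - 1) (by omega)
  obtain ⟨t1, ht1n, ht1⟩ := pp_surj hn p x1
  obtain ⟨t2, ht2n, ht2⟩ := pp_surj hn p x2
  have ht1i : i + 2 ≤ t1 := by
    rcases Nat.lt_or_ge t1 (i + 1) with h | h
    · exfalso
      have := H1 t1 (by omega)
      rw [ht1, hx1] at this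
      omega
    · rcases Nat.eq_or_lt_of_le h with h' | h'
      · exfalso
        have : x1 = c := by rw [← ht1, hc, h']
        rw [this] at hx1
        omega
      · omega
  have ht2i : i + 2 ≤ t2 := by
    rcases Nat.lt_or_ge t2 (i + 1) with h | h
    · exfalso
      have := H1 t2 (by omega)
      rw [ht2, hx2] at this
      omega
    · rcases Nat.eq_or_lt_of_le h with h' | h'
      · exfalso
        have : x2 = c := by rw [← ht2, hc, h']
        rw [this] at hx2
        omega
      · omega
  have ht12 : t1 ≠ t2 := by
    intro h
    rw [h, ht2] at ht1
    rw [ht1] at hx2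
    omega
  -- the side facts
  have hm' : dd n u a = 0 ∨ (0 < i ∧ dd n u a = i) := by
    rcases H2 with h | h
    · exact Or.inl h
    · rcases Nat.eq_zero_or_pos i with h0 | h0
      · exact Or.inl (by omega)
      · exact Or.inr ⟨h0, h⟩
  have hB : dd n x1 u < dd n c u ∧ ¬ (dd n x2 u < dd n c u) := by
    rcases hm' with hm | ⟨hipos, hm⟩
    · have hua : u = a := dd_eq_zero hn hm
      rw [hua, hx1, hx2]
      constructor
      · omega
      · omega
    · have hune : u ≠ a := by
        intro h
        rw [h, dd_self hn] at hm
        omega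
      have hau : dd n a u = n - i := by
        have h1 := dd_add_dd hn hune
        omega
      have h1 : dd n x1 u = 1 := by
        have hcc := dd_cocycle hn x1 a u
        rw [hx1, hau, show i + 1 + (n - i) = n + 1 by omega,
          Nat.add_mod_left, Nat.mod_eq_of_lt (by omega)] at hcc
        exact hcc.symm
      have h2 : dd n x2 u = n - 1 - i := by
        have hcc := dd_cocycle hn x2 a u
        rw [hx2, hau, show n - 1 + (n - i) = n + (n - 1 - i) by omega,
          Nat.add_mod_left, Nat.mod_eq_of_lt (by omega)] at hcc
        exact hcc.symm
      have h3 : dd n c u = dd n c a - i := by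
        have hcc := dd_cocycle hn c a u
        rw [hau, show dd n c a + (n - i) = n + (dd n c a - i) by omega,
          Nat.add_mod_left, Nat.mod_eq_of_lt (by omega)] at hcc
        exact hcc.symm
      rw [h1, h2, h3]
      constructor
      · omega
      · omega
  obtain ⟨hB1, hB2⟩ := hB
  -- find a switching edge
  have hsw : ∃ t, i + 2 ≤ t ∧ t + 1 < n ∧
      (dd n (pp hn p t) u < dd n c u ↔ ¬ (dd n (pp hn p (t + 1)) u < dd n c u)) := by
    rcases Nat.lt_or_ge t1 t2 with h | h
    · obtain ⟨t, hta, htb, htf, htnf⟩ := switch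
        (fun t => dd n (pp hn p t) u < dd n c u) t1 (t2 - t1)
        (by simpa only [ht1] using hB1)
        (by rw [show t1 + (t2 - t1) = t2 by omega]; simpa only [ht2] using hB2)
      exact ⟨t, by omega, by omega, Iff.intro (fun _ => htnf) (fun _ => htf)⟩
    · have h' : t2 < t1 := by omega
      obtain ⟨t, hta, htb, htf, htnf⟩ := switch
        (fun t => ¬ dd n (pp hn p t) u < dd n c u) t2 (t1 - t2)
        (by simpa only [ht2] using hB2)
        (by rw [show t2 + (t1 - t2) = t1 by omega]
            simp only [ht1, not_not]
            exact hB1)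
      refine ⟨t, by omega, by omega, iff_of_false htf ?_⟩
      simpa only [not_not] using htnf
  obtain ⟨t, hti, htn, hiff⟩ := hsw
  -- the two crossing edges
  have he : s(u, c) ∈ pathEdges p := by
    rw [mem_pathEdges hn]
    exact ⟨i, hi, by rw [hu, hc]⟩
  have hf : s(pp hn p t, pp hn p (t + 1)) ∈ pathEdges p := by
    rw [mem_pathEdges hn]
    exact ⟨t, htn, rfl⟩
  refine NC _ he _ hf ⟨u, c, pp hn p t, pp hn p (t + 1), rfl, rfl, ?_, ?_, ?_, ?_, ?_, ?_, ?_⟩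
  · rw [hu, hc]; exact pp_ne hn p (by omega) (by omega) (by omega)
  · exact pp_ne hn p (by omega) (by omega) (by omega)
  · rw [hu]; exact pp_ne hn p (by omega) (by omega) (by omega)
  · rw [hu]; exact pp_ne hn p (by omega) (by omega) (by omega)
  · rw [hc]; exact pp_ne hn p (by omega) (by omega) (by omega)
  · rw [hc]; exact pp_ne hn p (by omega) (by omega) (by omega)
  · exact hiff

/-- Extending the invariant by one step. -/
lemma Sd_extend (hn : 0 < n) (p : Equiv.Perm (Fin n))
    (a : Fin n) (i : ℕ) (hi : i + 1 < n) (hS : Sd hn p a i)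
    (hd : dd n (pp hn p (i + 1)) a = i + 1 ∨ dd n (pp hn p (i + 1)) a = n - 1) :
    ∃ a', Sd hn p a' (i + 1) := by
  obtain ⟨H1, H2, H3⟩ := hS
  set c := pp hn p (i + 1) with hc
  rcases hd with hd | hd
  · refine ⟨a, ?_, Or.inr hd, ?_⟩
    · intro j hj
      rcases Nat.eq_or_lt_of_le hj with h | h
      · rw [h, ← hc, hd]
      · exact le_trans (H1 j (by omega)) (by omega)
    · intro x hx
      rcases Nat.eq_or_lt_of_le hx with h | h
      · refine ⟨i + 1, le_refl _, ?_⟩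
        rw [← hc]
        exact (dd_inj hn (by rw [hd, ← h])).symm
      · obtain ⟨j, hj, hpj⟩ := H3 x (by omega)
        exact ⟨j, by omega, hpj⟩
  · have hca : c ≠ a := by
      intro h
      rw [h, dd_self hn] at hd
      omega
    have hac : dd n a c = 1 := by
      have := dd_add_dd hn hca
      omega
    refine ⟨c, ?_, Or.inl (dd_self hn c), ?_⟩
    · intro j hj
      rcases Nat.eq_or_lt_of_le hj with h | h
      · rw [h, dd_self hn]
        omega
      · have hj' := H1 j (by omega)
        have hcc := dd_cocycle hn (pp hn p j) a c
        rw [hac, Nat.mod_eq_of_lt (by omega)] at hcc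
        omega
    · intro x hx
      by_cases hxc : x = c
      · exact ⟨i + 1, le_refl _, hxc.symm⟩
      · have hxc' : 0 < dd n x c := by
          have := dd_eq_zero hn (x := x) (y := c)
          by_contra h
          exact hxc (this (by omega))
        have hcc := dd_cocycle hn x c a
        rw [hd, show dd n x c + (n - 1) = n + (dd n x c - 1) by omega,
          Nat.add_mod_left, Nat.mod_eq_of_lt (by omega)] at hcc
        obtain ⟨j, hj, hpj⟩ := H3 x (by omega)
        exact ⟨j, by omega, hpj⟩

/-- Normalization: if `x` is an endpoint of `w`, we can present `w` by a
permutation starting at `x`. -/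
lemma norm (hn : 0 < n) (w : PVert n) (x : Fin n) (hx : degIn w.1 x = 1) :
    ∃ p : Equiv.Perm (Fin n), w.1 = pathEdges p ∧
      (∀ e ∈ pathEdges p, ∀ f ∈ pathEdges p, ¬ Crosses e f) ∧ pp hn p 0 = x := by
  obtain ⟨⟨p, hE⟩, NC⟩ := w.2
  have NC' : ∀ e ∈ pathEdges p, ∀ f ∈ pathEdges p, ¬ Crosses e f := by
    rw [← hE]; exact NC
  obtain ⟨m, hmn, hm⟩ := pp_surj hn p x
  have hm0 : m = 0 ∨ m = n - 1 := by
    by_contra h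
    push_neg at h
    have h1 : 1 ≤ m ∧ m + 1 < n := by omega
    have he1 : s(pp hn p (m - 1), pp hn p m) ∈ pathEdges p := by
      rw [mem_pathEdges hn]
      exact ⟨m - 1, by omega, by rw [show m - 1 + 1 = m by omega]⟩
    have he2 : s(pp hn p m, pp hn p (m + 1)) ∈ pathEdges p :=
      (mem_pathEdges hn p _).mpr ⟨m, by omega, rfl⟩
    have hne : s(pp hn p (m - 1), pp hn p m) ≠ s(pp hn p m, pp hn p (m + 1)) := by
      intro hc
      rcases Sym2.eq_iff.mp hc with ⟨hc1, _⟩ | ⟨hc1, _⟩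
      · exact (pp_ne hn p (by omega) (by omega) (by omega)) hc1
      · exact (pp_ne hn p (by omega) (by omega) (by omega)) hc1
    have hsub : ({s(pp hn p (m - 1), pp hn p m), s(pp hn p m, pp hn p (m + 1))} :
        Finset (Sym2 (Fin n))) ⊆ w.1.filter (fun e => x ∈ e) := by
      intro e he
      rw [Finset.mem_insert, Finset.mem_singleton] at he
      rw [Finset.mem_filter]
      rcases he with he | he <;> subst he
      · exact ⟨by rw [hE]; exact he1, Sym2.mem_iff.mpr (Or.inr hm.symm)⟩
      · exact ⟨by rw [hE]; exact he2, Sym2.mem_iff.mpr (Or.inl hm.symm)⟩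
    have hcard := Finset.card_le_card hsub
    rw [Finset.card_pair hne] at hcard
    unfold degIn at hx
    omega
  rcases hm0 with h0 | h0
  · exact ⟨p, hE, NC', by rw [← hm, h0]⟩
  · refine ⟨Fin.revPerm.trans p, ?_, ?_, ?_⟩
    · rw [pathEdges_rev hn]; exact hE
    · rw [pathEdges_rev hn]; exact NC'
    · rw [pp_rev hn p hn]
      simp only [Nat.sub_zero]
      rw [← h0]
      exact hm

/-- The conflict case: the two paths cannot extend the common arc to opposite
sides, given that they have the same hull edges. -/
lemma conflict (hn : 0 < n) (p r : Equiv.Perm (Fin n))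
    (hH : (pathEdges p).filter (fun e => IsHullEdge e)
        = (pathEdges r).filter (fun e => IsHullEdge e))
    (a : Fin n) (i : ℕ) (hi2 : i + 2 < n)
    (hpr : ∀ j ≤ i, pp hn p j = pp hn r j)
    (Sp : Sd hn p a i)
    (hp : dd n (pp hn p (i + 1)) a = i + 1)
    (hr : dd n (pp hn r (i + 1)) a = n - 1) : False := by
  obtain ⟨H1, H2, H3⟩ := Sp
  set u := pp hn p i with hu
  have hur : pp hn r i = u := (hpr i (le_refl i)).symm
  set x1 := pp hn p (i + 1) with hx1
  set x2 := pp hn r (i + 1) with hx2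
  have hm' : dd n u a = 0 ∨ (0 < i ∧ dd n u a = i) := by
    rcases H2 with h | h
    · exact Or.inl h
    · rcases Nat.eq_zero_or_pos i with h0 | h0
      · exact Or.inl (by omega)
      · exact Or.inr ⟨h0, h⟩
  rcases hm' with hm | ⟨hipos, hm⟩
  · -- u = a : the edge s(u, x2) of r is a hull edge, hence an edge of p
    have hua : u = a := dd_eq_zero hn hm
    have hx2u : dd n x2 u = n - 1 := by rw [hua]; exact hr
    have hx2ne : x2 ≠ u := by
      intro h
      rw [h, dd_self hn] at hx2u
      omega
    have hhull : IsHullEdge s(u, x2) :=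
      isHullEdge_of_dd_one' hn (by have := dd_add_dd hn hx2ne; omega)
    have hmem : s(u, x2) ∈ pathEdges r := by
      rw [mem_pathEdges hn]
      exact ⟨i, by omega, by rw [hur]⟩
    have hmemp : s(u, x2) ∈ pathEdges p := by
      have h2 : s(u, x2) ∈ (pathEdges r).filter (fun e => IsHullEdge e) :=
        Finset.mem_filter.mpr ⟨hmem, hhull⟩
      rw [← hH] at h2
      exact (Finset.mem_filter.mp h2).1
    obtain ⟨t, htn, hte⟩ := (mem_pathEdges hn p _).mp hmemp
    rcases Sym2.eq_iff.mp hte with ⟨h1, h2⟩ | ⟨h1, h2⟩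
    · have hti : i = t := pp_inj hn p (by omega) (by omega) (hu ▸ h1)
      rw [← hti] at h2
      rw [h2, ← hx1] at hr
      omega
    · have hti : i = t + 1 := pp_inj hn p (by omega) htn (hu ▸ h1)
      have hle := H1 t (by omega)
      rw [← h2] at hle
      omega
  · -- u = a + i : the edge s(u, x1) of p is a hull edge, hence an edge of r
    have hune : u ≠ a := by
      intro h
      rw [h, dd_self hn] at hm
      omega
    have hau : dd n a u = n - i := by
      have := dd_add_dd hn hune
      omega
    have hx1u : dd n x1 u = 1 := by
      have hcc := dd_cocycle hn x1 a u
      rw [hp, hau, show i + 1 + (n - i) = n + 1 by omega,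
        Nat.add_mod_left, Nat.mod_eq_of_lt (by omega)] at hcc
      exact hcc.symm
    have hhull : IsHullEdge s(u, x1) := isHullEdge_of_dd_one hn hx1u
    have hmem : s(u, x1) ∈ pathEdges p := (mem_pathEdges hn p _).mpr ⟨i, by omega, rfl⟩
    have hmemr : s(u, x1) ∈ pathEdges r := by
      have h2 : s(u, x1) ∈ (pathEdges p).filter (fun e => IsHullEdge e) :=
        Finset.mem_filter.mpr ⟨hmem, hhull⟩
      rw [hH] at h2
      exact (Finset.mem_filter.mp h2).1
    obtain ⟨t, htn, hte⟩ := (mem_pathEdges hn r _).mp hmemr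
    rcases Sym2.eq_iff.mp hte with ⟨h1, h2⟩ | ⟨h1, h2⟩
    · have hti : i = t := pp_inj hn r (by omega) (by omega) (hur.trans h1)
      rw [← hti, ← hx2] at h2
      rw [h2] at hp
      omega
    · have hti : i = t + 1 := pp_inj hn r (by omega) htn (hur.trans h1)
      have hx1t : x1 = pp hn p t := by rw [h2, ← hpr t (by omega)]
      have hle := H1 t (by omega)
      rw [← hx1t] at hle
      omega

/-- Two non-crossing spanning paths with the same hull edges and the same
first point coincide. -/
lemma uniq (hn : 0 < n) (p r : Equiv.Perm (Fin n))
    (NCp : ∀ e ∈ pathEdges p, ∀ f ∈ pathEdges p, ¬ Crosses e f)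
    (NCr : ∀ e ∈ pathEdges r, ∀ f ∈ pathEdges r, ¬ Crosses e f)
    (hH : (pathEdges p).filter (fun e => IsHullEdge e)
        = (pathEdges r).filter (fun e => IsHullEdge e))
    (h0 : pp hn p 0 = pp hn r 0) : ∀ j, j < n → pp hn p j = pp hn r j := by
  have key : ∀ i, i < n → ((∀ j ≤ i, pp hn p j = pp hn r j) ∧ ∃ a, Sd hn p a i) := by
    intro i
    induction i with
    | zero =>
      intro _
      exact ⟨fun j hj => by interval_cases j; exact h0, ⟨pp hn p 0, Sd_base hn p⟩⟩
    | succ i ih =>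
      intro hin
      obtain ⟨hpr, a, Sp⟩ := ih (by omega)
      have Sr : Sd hn r a i := by
        obtain ⟨H1, H2, H3⟩ := Sp
        refine ⟨fun j hj => by rw [← hpr j hj]; exact H1 j hj,
                by rw [← hpr i (le_refl i)]; exact H2,
                fun x hx => ?_⟩
        obtain ⟨j, hj, hpj⟩ := H3 x hx
        exact ⟨j, hj, by rw [← hpr j hj]; exact hpj⟩
      have dp := Sd_step hn p NCp a i hin Sp
      have dr := Sd_step hn r NCr a i hin Sr
      have heq : pp hn p (i + 1) = pp hn r (i + 1) := by
        rcases Nat.lt_or_ge (i + 2) n with h2 | h2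
        · rcases dp with dp' | dp' <;> rcases dr with dr' | dr'
          · exact dd_inj hn (a := a) (by omega)
          · exact (conflict hn p r hH a i h2 hpr Sp dp' dr').elim
          · exact (conflict hn r p hH.symm a i h2 (fun j hj => (hpr j hj).symm)
              Sr dr' dp').elim
          · exact dd_inj hn (a := a) (by omega)
        · have hlast : i + 2 = n := by omega
          rcases dp with dp' | dp' <;> rcases dr with dr' | dr' <;>
            exact dd_inj hn (a := a) (by omega)
      refine ⟨?_, Sd_extend hn p a i hin Sp dp⟩
      intro j hj
      rcases Nat.eq_or_lt_of_le hj with h | h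
      · rw [h]; exact heq
      · exact hpr j (by omega)
  intro j hj
  exact (key j hj).1 j (le_refl j)

/-- If the hull edges of a plane spanning path `v` (with at least one diagonal)
decompose into `k ≥ 2` boundary arcs, then: (a) fixing an endpoint of `v`
determines `v` uniquely among paths with the same hull-edge set, and
(b) a degenerate (single-vertex) arc cannot contain an endpoint of `v`. -/
theorem completion_unique_of_endpoint (n : ℕ) (hn : 3 ≤ n) :
    (∀ w₁ w₂ : PVert n, (∃ e ∈ w₁.1, ¬ IsHullEdge e) →
      w₁.1.filter (fun e => IsHullEdge e) = w₂.1.filter (fun e => IsHullEdge e) →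
      ∀ x : Fin n, degIn w₁.1 x = 1 → degIn w₂.1 x = 1 → w₁ = w₂) ∧
    (∀ w : PVert n, (∃ e ∈ w.1, ¬ IsHullEdge e) →
      ∀ x : Fin n, degIn w.1 x = 1 → ∃ e ∈ w.1, IsHullEdge e ∧ x ∈ e) := by
  have hn0 : 0 < n := by omega
  constructor
  · intro w₁ w₂ _hdiag hfil x h1 h2
    obtain ⟨p, hp1, NCp, hp0⟩ := norm hn0 w₁ x h1
    obtain ⟨r, hr1, NCr, hr0⟩ := norm hn0 w₂ x h2
    have hH : (pathEdges p).filter (fun e => IsHullEdge e)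
        = (pathEdges r).filter (fun e => IsHullEdge e) := by
      rw [← hp1, ← hr1]
      exact hfil
    have huniq := uniq hn0 p r NCp NCr hH (by rw [hp0, hr0])
    have hpe : p = r := by
      apply Equiv.ext
      intro j
      have h3 := huniq j.val j.isLt
      unfold pp at h3
      rw [pt_of_lt hn0 j.isLt] at h3
      simpa only [Fin.eta] using h3
    exact Subtype.ext (by rw [hp1, hpe, ← hr1])
  · intro w _hdiag x h1
    obtain ⟨p, hp1, NCp, hp0⟩ := norm hn0 w x h1
    have hd : dd n (pp hn0 p 1) (pp hn0 p 0) = 1 ∨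
        dd n (pp hn0 p 1) (pp hn0 p 0) = n - 1 :=
      Sd_step hn0 p NCp (pp hn0 p 0) 0 (by omega) (Sd_base hn0 p)
    refine ⟨s(pp hn0 p 0, pp hn0 p 1), ?_, ?_, ?_⟩
    · rw [hp1, mem_pathEdges hn0]
      exact ⟨0, by omega, rfl⟩
    · rcases hd with h | h
      · exact isHullEdge_of_dd_one hn0 h
      · have hne : pp hn0 p 1 ≠ pp hn0 p 0 := pp_ne hn0 p (by omega) (by omega) (by omega)
        exact isHullEdge_of_dd_one' hn0 (by have := dd_add_dd hn0 hne; omega)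
    · exact Sym2.mem_iff.mpr (Or.inl hp0.symm)

end PG
end

section
/- Every automorphism of the complete convex geometric graph K(P) on n ≥ 3 points in convex position (an abstract graph automorphism that maps crossing edge pairs to crossing pairs and non-crossing pairs to non-crossing pairs) is induced by a rotation or reflection of the cyclic order, so the group of such automorphisms is isomorphic to the dihedral group D_n. -/
namespace PG

section Aux
variable {n : ℕ} [NeZero n]

lemma val_sub' (a b : Fin n) : (a - b).val = (a.val + (n - b.val)) % n := by
  rw [Fin.sub_def]; simp only []; rw [Nat.add_comm]

lemma val_zero' : ((0 : Fin n) : ℕ) = 0 := rfl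

lemma fin_eq_zero_iff (a : Fin n) : a = 0 ↔ a.val = 0 := by
  constructor
  · rintro rfl; rfl
  · intro h; exact Fin.val_injective h

lemma sub_val_pos {a b : Fin n} (h : a ≠ b) : 1 ≤ (b - a).val := by
  have h1 : b - a ≠ 0 := fun hc => h (sub_eq_zero.mp hc).symm
  have := (fin_eq_zero_iff (b - a)).not.mp h1
  omega

lemma val_neg_sub {a b : Fin n} (h : a ≠ b) : (a - b).val = n - (b - a).val := by
  have h1 : a - b = 0 - (b - a) := by abel
  rw [h1, val_sub']
  have h2 := sub_val_pos h
  have h3 := (b - a).isLt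
  rw [val_zero']
  rw [Nat.zero_add, Nat.mod_eq_of_lt (by omega)]

/-- `x` is strictly inside the arc from `a` to `b` (going counterclockwise). -/
def Pa (a b x : Fin n) : Prop := (x - a).val < (b - a).val

lemma pa_iff (a b x : Fin n) :
    ((x.val + n - a.val) % n < (b.val + n - a.val) % n) ↔ Pa a b x := by
  unfold Pa
  rw [val_sub', val_sub']
  have ha := a.isLt
  have e1 : x.val + n - a.val = x.val + (n - a.val) := by omega
  have e2 : b.val + n - a.val = b.val + (n - a.val) := by omega
  rw [e1, e2]

lemma diff_ne {a x b : Fin n} (h : x ≠ b) : (x - a).val ≠ (b - a).val := by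
  intro hc
  exact h (sub_left_inj.mp (Fin.val_injective hc))

lemma pa_not {a b x : Fin n} (hab : a ≠ b) (hxa : x ≠ a) (hxb : x ≠ b) :
    Pa b a x ↔ ¬ Pa a b x := by
  unfold Pa
  have hsub : x - b = (x - a) - (b - a) := (sub_sub_sub_cancel_right x b a).symm
  set u := (x - a).val with hu
  set v := (b - a).val with hv
  have hu1 : 1 ≤ u := sub_val_pos hxa.symm
  have hun : u < n := (x - a).isLt
  have hv1 : 1 ≤ v := sub_val_pos hab
  have hvn : v < n := (b - a).isLt
  have huv : u ≠ v := diff_ne hxb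
  have hab' : (a - b).val = n - v := val_neg_sub hab
  have hxb' : (x - b).val = (u + n - v) % n := by
    rw [hsub, val_sub', ← hu, ← hv]
    congr 1; omega
  rw [hab', hxb']
  rcases Nat.lt_or_ge u v with h | h
  · rw [Nat.mod_eq_of_lt (by omega)]
    constructor
    · intro hc; omega
    · intro hc; exact (hc h).elim
  · have : u + n - v = (u - v) + n := by omega
    rw [this, Nat.add_mod_right, Nat.mod_eq_of_lt (by omega)]
    constructor
    · intro _ hc; omega
    · intro _; omega

lemma pa_refl {a b x : Fin n} (hab : a ≠ b) (hxa : x ≠ a) (hxb : x ≠ b) :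
    ((a - x).val < (a - b).val) ↔ ¬ Pa a b x := by
  unfold Pa
  set u := (x - a).val with hu
  set v := (b - a).val with hv
  have hu1 : 1 ≤ u := sub_val_pos hxa.symm
  have hun : u < n := (x - a).isLt
  have hv1 : 1 ≤ v := sub_val_pos hab
  have hvn : v < n := (b - a).isLt
  have huv : u ≠ v := diff_ne hxb
  rw [val_neg_sub hxa.symm, val_neg_sub hab, ← hu, ← hv]
  omega


def Good (a b c d : Fin n) : Prop :=
  a ≠ b ∧ c ≠ d ∧ a ≠ c ∧ a ≠ d ∧ b ≠ c ∧ b ≠ d ∧ (Pa a b c ↔ ¬ Pa a b d)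

lemma good_cd {a b c d : Fin n} (h : Good a b c d) : Good a b d c := by
  obtain ⟨h1, h2, h3, h4, h5, h6, h7⟩ := h
  exact ⟨h1, h2.symm, h4, h3, h6, h5, by tauto⟩

lemma good_ab {a b c d : Fin n} (h : Good a b c d) : Good b a c d := by
  obtain ⟨h1, h2, h3, h4, h5, h6, h7⟩ := h
  refine ⟨h1.symm, h2, h5, h6, h3, h4, ?_⟩
  rw [pa_not h1 h3.symm h5.symm, pa_not h1 h4.symm h6.symm]
  tauto

lemma crosses_iff (a b c d : Fin n) : Crosses s(a, b) s(c, d) ↔ Good a b c d := by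
  constructor
  · rintro ⟨a', b', c', d', he, hf, h1, h2, h3, h4, h5, h6, h7⟩
    rw [Sym2.eq_iff] at he hf
    rw [pa_iff, pa_iff] at h7
    have key : Good a' b' c' d' := ⟨h1, h2, h3, h4, h5, h6, h7⟩
    rcases he with ⟨rfl, rfl⟩ | ⟨rfl, rfl⟩ <;> rcases hf with ⟨rfl, rfl⟩ | ⟨rfl, rfl⟩
    · exact key
    · exact good_cd key
    · exact good_ab key
    · exact good_ab (good_cd key)
  · rintro ⟨h1, h2, h3, h4, h5, h6, h7⟩
    exact ⟨a, b, c, d, rfl, rfl, h1, h2, h3, h4, h5, h6,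
      by rw [pa_iff, pa_iff]; exact h7⟩

variable (hn : 3 ≤ n)
include hn

lemma val_one3 : ((1 : Fin n) : ℕ) = 1 := by
  rw [Fin.val_one']; exact Nat.mod_eq_of_lt (by omega)

lemma add_one_sub_val (a : Fin n) : (a + 1 - a).val = 1 := by
  rw [add_comm, add_sub_cancel_right, val_one3 hn]

lemma self_ne_add_one (a : Fin n) : a ≠ a + 1 := by
  intro hc
  have h2 : (a + 1 - a).val = 1 := add_one_sub_val hn a
  rw [← hc, sub_self] at h2
  rw [val_zero'] at h2
  omega

lemma hull_nocross (a : Fin n) (f : Sym2 (Fin n)) : ¬ Crosses s(a, a + 1) f := by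
  induction f using Sym2.ind with
  | _ c d =>
    intro hc
    rw [crosses_iff] at hc
    obtain ⟨h1, h2, h3, h4, h5, h6, h7⟩ := hc
    have hb : (a + 1 - a).val = 1 := add_one_sub_val hn a
    have hc1 : ¬ Pa a (a + 1) c := by
      unfold Pa; rw [hb]; intro h
      exact h3 (((fin_eq_zero_iff _).mpr (by omega) : c - a = 0) |> sub_eq_zero.mp).symm
    have hd1 : ¬ Pa a (a + 1) d := by
      unfold Pa; rw [hb]; intro h
      exact h4 (((fin_eq_zero_iff _).mpr (by omega) : d - a = 0) |> sub_eq_zero.mp).symm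
    tauto

lemma hull_of_nocross {u v : Fin n} (huv : u ≠ v)
    (h : ¬ Crosses s(u, v) s(u + 1, v + 1)) : v = u + 1 ∨ u = v + 1 := by
  by_contra hcon
  push_neg at hcon
  obtain ⟨h1, h2⟩ := hcon
  apply h
  rw [crosses_iff]
  have hv2 : 2 ≤ (v - u).val := by
    have hv1 : 1 ≤ (v - u).val := sub_val_pos huv
    have : (v - u).val ≠ 1 := by
      intro hc
      apply h1
      have h3 : v - u = 1 := Fin.val_injective (by rw [hc, val_one3 hn])
      rw [sub_eq_iff_eq_add.mp h3, add_comm]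
    omega
  refine ⟨huv, fun hc => huv (add_right_cancel hc), self_ne_add_one hn u, h2, h1,
    self_ne_add_one hn v, ?_⟩
  · have hPc : Pa u v (u + 1) := by
      unfold Pa
      rw [add_one_sub_val hn u]
      omega
    have hPd : ¬ Pa u v (v + 1) := by
      unfold Pa
      have hne : v - u ≠ 0 - 1 := by
        intro hc
        apply h2
        have h4 : v = u - 1 := by
          rw [sub_eq_iff_eq_add.mp hc]; abel
        rw [h4, sub_add_cancel]
      have hval : (v - u).val ≠ n - 1 := by
        intro hc
        apply hne
        apply Fin.val_injective
        rw [hc, val_sub', val_zero', val_one3 hn, Nat.zero_add, Nat.mod_eq_of_lt (by omega)]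
      have hrw : v + 1 - u = (v - u) + 1 := by abel
      rw [hrw, Fin.val_add, val_one3 hn]
      have hlt : (v - u).val < n := (v - u).isLt
      rw [Nat.mod_eq_of_lt (by omega)]
      omega
    tauto


lemma step (σ : Equiv.Perm (Fin n))
    (hσ : ∀ e f : Sym2 (Fin n), Crosses e f ↔ Crosses (e.map σ) (f.map σ)) (a : Fin n) :
    σ (a + 1) = σ a + 1 ∨ σ a = σ (a + 1) + 1 := by
  have huv : σ a ≠ σ (a + 1) := σ.injective.ne (self_ne_add_one hn a)
  apply hull_of_nocross hn huv
  intro hc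
  have hpre : Crosses s(a, a + 1) (Sym2.map σ.symm s(σ a + 1, σ (a + 1) + 1)) := by
    rw [hσ]
    have e1 : Sym2.map σ s(a, a + 1) = s(σ a, σ (a + 1)) := Sym2.map_pair_eq _ _ _
    have e2 : Sym2.map σ (Sym2.map (⇑σ.symm) s(σ a + 1, σ (a + 1) + 1))
        = s(σ a + 1, σ (a + 1) + 1) := by
      rw [Sym2.map_pair_eq, Sym2.map_pair_eq]
      simp
    rw [e1, e2]
    exact hc
  exact hull_nocross hn a _ hpre

lemma sub_one_val {x : Fin n} (hx : x.val ≠ 0) : (x - 1).val = x.val - 1 := by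
  rw [val_sub', val_one3 hn]
  have h1 := x.isLt
  have : x.val + (n - 1) = (x.val - 1) + n := by omega
  rw [this, Nat.add_mod_right, Nat.mod_eq_of_lt (by omega)]

lemma rigid_plus (σ : Equiv.Perm (Fin n))
    (hstep : ∀ a : Fin n, σ (a + 1) = σ a + 1 ∨ σ a = σ (a + 1) + 1)
    (h1 : σ 1 = σ 0 + 1) : ∀ x : Fin n, σ x = σ 0 + x := by
  suffices h : ∀ m : ℕ, ∀ x : Fin n, x.val = m → σ x = σ 0 + x by
    intro x; exact h x.val x rfl
  intro m
  induction m using Nat.strong_induction_on with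
  | _ m ih =>
    intro x hx
    match m, hx with
    | 0, hx =>
      have : x = 0 := Fin.val_injective hx
      subst this; simp
    | 1, hx =>
      have : x = 1 := Fin.val_injective (by rw [hx, val_one3 hn])
      subst this; exact h1
    | (m + 2), hx =>
      have hxn := x.isLt
      set b := x - 1 with hb
      have hbv : b.val = m + 1 := by rw [hb, sub_one_val hn (by omega), hx]; omega
      have hbx : b + 1 = x := sub_add_cancel x 1
      have hIHb : σ b = σ 0 + b := ih (m + 1) (by omega) b hbv
      rcases hstep b with h | h
      · rw [hbx] at h
        rw [h, hIHb, add_assoc, hbx]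
      · exfalso
        set c := b - 1 with hc
        have hcv : c.val = m := by rw [hc, sub_one_val hn (by omega), hbv]; omega
        have hIHc : σ c = σ 0 + c := ih m (by omega) c hcv
        rw [hbx] at h
        have hσx : σ x = σ b - 1 := eq_sub_iff_add_eq.mpr h.symm
        have : σ c = σ x := by
          rw [hσx, hIHb, hIHc, hc]; abel
        have := σ.injective this
        rw [← this] at hx
        omega

lemma rigid_minus (σ : Equiv.Perm (Fin n))
    (hstep : ∀ a : Fin n, σ (a + 1) = σ a + 1 ∨ σ a = σ (a + 1) + 1)
    (h1 : σ 0 = σ 1 + 1) : ∀ x : Fin n, σ x = σ 0 - x := by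
  suffices h : ∀ m : ℕ, ∀ x : Fin n, x.val = m → σ x = σ 0 - x by
    intro x; exact h x.val x rfl
  intro m
  induction m using Nat.strong_induction_on with
  | _ m ih =>
    intro x hx
    match m, hx with
    | 0, hx =>
      have : x = 0 := Fin.val_injective hx
      subst this; simp
    | 1, hx =>
      have hx1 : x = 1 := Fin.val_injective (by rw [hx, val_one3 hn])
      subst hx1
      exact eq_sub_iff_add_eq.mpr h1.symm
    | (m + 2), hx =>
      have hxn := x.isLt
      set b := x - 1 with hb
      have hbv : b.val = m + 1 := by rw [hb, sub_one_val hn (by omega), hx]; omega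
      have hbx : b + 1 = x := sub_add_cancel x 1
      have hIHb : σ b = σ 0 - b := ih (m + 1) (by omega) b hbv
      rcases hstep b with h | h
      · exfalso
        set c := b - 1 with hc
        have hcv : c.val = m := by rw [hc, sub_one_val hn (by omega), hbv]; omega
        have hIHc : σ c = σ 0 - c := ih m (by omega) c hcv
        rw [hbx] at h
        have : σ c = σ x := by
          rw [h, hIHb, hIHc, hc]; abel
        have := σ.injective this
        rw [← this] at hx
        omega
      · rw [hbx] at h
        have hσx : σ x = σ b - 1 := eq_sub_iff_add_eq.mpr h.symm
        rw [hσx, hIHb, hb]; abel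

lemma classify (σ : Equiv.Perm (Fin n))
    (hσ : ∀ e f : Sym2 (Fin n), Crosses e f ↔ Crosses (e.map σ) (f.map σ)) :
    (∀ x : Fin n, σ x = σ 0 + x) ∨ (∀ x : Fin n, σ x = σ 0 - x) := by
  have hstep := step hn σ hσ
  have h01 : (0 : Fin n) + 1 = 1 := zero_add 1
  rcases hstep 0 with h1 | h1
  · left; exact rigid_plus hn σ hstep (by simpa using h1)
  · right; exact rigid_minus hn σ hstep (by simpa using h1)


omit hn

/-- The additive hom `ZMod n →+ Fin n` (an iso, but we only need the hom). -/
def zfh : ZMod n →+ Fin n :=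
  AddMonoidHom.mk' (fun i => ⟨i.val, ZMod.val_lt i⟩)
    (by intro a b; apply Fin.val_injective; simp [ZMod.val_add, Fin.val_add])

lemma zfh_cast (c : Fin n) : zfh ((c.val : ℕ) : ZMod n) = c := by
  apply Fin.val_injective
  show (((c.val : ℕ) : ZMod n)).val = c.val
  exact ZMod.val_cast_of_lt c.isLt

lemma zfh_inj : Function.Injective (zfh (n := n)) := by
  intro a b h
  have : (⟨a.val, ZMod.val_lt a⟩ : Fin n) = ⟨b.val, ZMod.val_lt b⟩ := h
  have hv : a.val = b.val := congrArg Fin.val this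
  exact ZMod.val_injective n hv

/-- The dihedral group acting on `Fin n` by rotations and reflections. -/
def dihToPerm : DihedralGroup n →* Equiv.Perm (Fin n) where
  toFun g := match g with
    | .r i => Equiv.subRight (zfh i)
    | .sr i => Equiv.subLeft (zfh i)
  map_one' := by
    show Equiv.subRight (zfh 0) = 1
    ext x
    simp
  map_mul' := by
    rintro (i | i) (j | j)
    · show Equiv.subRight (zfh (i + j)) = Equiv.subRight (zfh i) * Equiv.subRight (zfh j)
      ext x
      simp only [Equiv.Perm.mul_apply, Equiv.subRight_apply, map_add]
      abel
    · show Equiv.subLeft (zfh (j - i)) = Equiv.subRight (zfh i) * Equiv.subLeft (zfh j)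
      ext x
      simp only [Equiv.Perm.mul_apply, Equiv.subRight_apply, Equiv.subLeft_apply, map_sub]
      abel
    · show Equiv.subLeft (zfh (i + j)) = Equiv.subLeft (zfh i) * Equiv.subRight (zfh j)
      ext x
      simp only [Equiv.Perm.mul_apply, Equiv.subRight_apply, Equiv.subLeft_apply, map_add]
      abel
    · show Equiv.subRight (zfh (j - i)) = Equiv.subLeft (zfh i) * Equiv.subLeft (zfh j)
      ext x
      simp only [Equiv.Perm.mul_apply, Equiv.subRight_apply, Equiv.subLeft_apply, map_sub]
      abel

lemma dihToPerm_r (i : ZMod n) : dihToPerm (.r i) = Equiv.subRight (zfh i) := rfl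
lemma dihToPerm_sr (i : ZMod n) : dihToPerm (.sr i) = Equiv.subLeft (zfh i) := rfl

lemma preserves_of_good (σ : Equiv.Perm (Fin n))
    (hg : ∀ a b c d : Fin n, Good a b c d ↔ Good (σ a) (σ b) (σ c) (σ d)) :
    ∀ e f : Sym2 (Fin n), Crosses e f ↔ Crosses (e.map σ) (f.map σ) := by
  intro e f
  induction e using Sym2.ind with
  | _ a b =>
    induction f using Sym2.ind with
    | _ c d =>
      rw [Sym2.map_pair_eq, Sym2.map_pair_eq, crosses_iff, crosses_iff]
      exact hg a b c d

lemma rot_preserves (t : Fin n) :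
    ∀ e f : Sym2 (Fin n), Crosses e f ↔ Crosses (e.map (Equiv.subRight t)) (f.map (Equiv.subRight t)) := by
  apply preserves_of_good
  intro a b c d
  have hsub : ∀ x y : Fin n, Equiv.subRight t x - Equiv.subRight t y = x - y := by
    intro x y
    simp only [Equiv.subRight_apply]
    exact sub_sub_sub_cancel_right x y t
  unfold Good Pa
  simp only [ne_eq, Equiv.apply_eq_iff_eq, hsub]

lemma refl_preserves (t : Fin n) :
    ∀ e f : Sym2 (Fin n), Crosses e f ↔ Crosses (e.map (Equiv.subLeft t)) (f.map (Equiv.subLeft t)) := by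
  apply preserves_of_good
  intro a b c d
  have hsub : ∀ x y : Fin n, Equiv.subLeft t x - Equiv.subLeft t y = y - x := by
    intro x y
    simp only [Equiv.subLeft_apply]
    exact sub_sub_sub_cancel_left x y t
  unfold Good
  simp only [ne_eq, Equiv.apply_eq_iff_eq]
  constructor
  · rintro ⟨h1, h2, h3, h4, h5, h6, h7⟩
    refine ⟨h1, h2, h3, h4, h5, h6, ?_⟩
    unfold Pa
    rw [hsub, hsub, hsub]
    have hc := pa_refl h1 (Ne.symm h3) (Ne.symm h5)
    have hd := pa_refl h1 (Ne.symm h4) (Ne.symm h6)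
    unfold Pa at hc hd h7
    rw [hc, hd]
    tauto
  · rintro ⟨h1, h2, h3, h4, h5, h6, h7⟩
    refine ⟨h1, h2, h3, h4, h5, h6, ?_⟩
    unfold Pa at h7 ⊢
    rw [hsub, hsub, hsub] at h7
    have hc := pa_refl h1 (Ne.symm h3) (Ne.symm h5)
    have hd := pa_refl h1 (Ne.symm h4) (Ne.symm h6)
    unfold Pa at hc hd
    rw [hc, hd] at h7
    tauto

end Aux

/-- Every geometric automorphism of the complete convex geometric graph `K(P)`
(a permutation of the points preserving the crossing relation of edges) is
induced by a rotation or a reflection of the cyclic order, and the group of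
geometric automorphisms is isomorphic to the dihedral group `D_n`. -/

theorem geom_aut_complete_graph (n : ℕ) (hn : 3 ≤ n) :
    (∀ σ : Equiv.Perm (Fin n),
      (∀ e f : Sym2 (Fin n), Crosses e f ↔ Crosses (e.map σ) (f.map σ)) →
      (∃ r : ℕ, ∀ x : Fin n, (σ x).val = (x.val + r) % n) ∨
      (∃ r : ℕ, ∀ x : Fin n, (σ x).val = (r + (n - x.val)) % n)) ∧
    (∃ Φ : DihedralGroup n →* Equiv.Perm (Fin n), Function.Injective Φ ∧
      Set.range Φ = {σ : Equiv.Perm (Fin n) |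
        ∀ e f : Sym2 (Fin n), Crosses e f ↔ Crosses (e.map σ) (f.map σ)}) := by
  haveI : NeZero n := ⟨by omega⟩
  constructor
  · intro σ hσ
    rcases classify hn σ hσ with h | h
    · left
      refine ⟨(σ 0).val, fun x => ?_⟩
      rw [h x, Fin.val_add, Nat.add_comm]
    · right
      refine ⟨(σ 0).val, fun x => ?_⟩
      rw [h x, val_sub']
  · refine ⟨dihToPerm, ?_, ?_⟩
    · rw [injective_iff_map_eq_one]
      rintro (i | i) h
      · rw [dihToPerm_r] at h
        have h0 := Equiv.ext_iff.mp h 0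
        rw [Equiv.subRight_apply] at h0
        have hi : zfh i = 0 := by
          have : (0 : Fin n) - zfh i = 0 - 0 := by rw [h0]; simp
          exact sub_right_inj.mp this
        have : i = 0 := zfh_inj (by rw [hi, map_zero])
        rw [this, DihedralGroup.one_def]
      · exfalso
        rw [dihToPerm_sr] at h
        have h0 := Equiv.ext_iff.mp h 0
        have h1 := Equiv.ext_iff.mp h 1
        rw [Equiv.subLeft_apply] at h0 h1
        simp only [Equiv.Perm.one_apply] at h0 h1
        rw [sub_zero] at h0
        rw [h0] at h1
        have hv := congrArg Fin.val h1
        rw [val_sub', val_zero', val_one3 hn, Nat.zero_add,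
          Nat.mod_eq_of_lt (by omega)] at hv
        omega
    · ext σ
      simp only [Set.mem_range, Set.mem_setOf_eq]
      constructor
      · rintro ⟨g, rfl⟩
        cases g with
        | r i => rw [dihToPerm_r]; exact rot_preserves _
        | sr i => rw [dihToPerm_sr]; exact refl_preserves _
      · intro hσ
        rcases classify hn σ hσ with h | h
        · refine ⟨DihedralGroup.r ((((-(σ 0)) : Fin n)).val : ZMod n), ?_⟩
          rw [dihToPerm_r]
          ext x
          rw [Equiv.subRight_apply, zfh_cast, h x, sub_neg_eq_add, add_comm]
        · refine ⟨DihedralGroup.sr (((σ 0 : Fin n)).val : ZMod n), ?_⟩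
          rw [dihToPerm_sr]
          ext x
          rw [Equiv.subLeft_apply, zfh_cast, h x]

end PG
end
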